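/- For any real α and natural n ≥ 1, summing over all set partitions π of {1,…,n}: Σ_π ∏_{B ∈ π} α^{(|B|)} (-c)^{(|π|)} = (-αc)^{(n)}, where x^{(m)} denotes the falling factorial. Equivalently, Σ_{k=1}^{n} C(n,k,α)(-c)^{(k)} = (-αc)^{(n)}, where C(n,k,α) = Σ_{π: |π|=k} ∏_{B∈π} α^{(|B|)} are the C-numbers of Charalambides. -/

import Mathlib

open Finset

namespace Chara

variable {A : Type*} [DecidableEq A] {a : A} {s : Finset A}

lemma singleton_not_mem (ha : a ∉ s) (P : Finpartition s) : ({a} : Finset A) ∉ P.parts :=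
  fun h => ha (singleton_subset_iff.mp (P.le h))

lemma not_mem_of_mem_parts (ha : a ∉ s) (P : Finpartition s) {B : Finset A}
    (hB : B ∈ P.parts) : a ∉ B := fun h => ha (P.le hB h)

/-- Add `a` as a new singleton part. -/
def insertPart (ha : a ∉ s) (P : Finpartition s) : Finpartition (insert a s) :=
  P.extend (b := {a}) (by simp) (by simpa using ha)
    (by rw [sup_eq_union, union_comm, ← insert_eq])

lemma insertPart_parts (ha : a ∉ s) (P : Finpartition s) :
    (insertPart ha P).parts = insert {a} P.parts := rfl

/-- Add `a` to the part `B` of `P`. -/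
def addToPart (ha : a ∉ s) (P : Finpartition s) {B : Finset A} (hB : B ∈ P.parts) :
    Finpartition (insert a s) where
  parts := insert (insert a B) (P.parts.erase B)
  supIndep := by
    rw [supIndep_iff_pairwiseDisjoint, coe_insert]
    refine (P.disjoint.subset (coe_subset.mpr (erase_subset _ _))).insert ?_
    intro C hC _
    simp only [mem_coe, mem_erase] at hC
    exact disjoint_insert_left.mpr
      ⟨not_mem_of_mem_parts ha P hC.2, P.disjoint hB hC.2 (Ne.symm hC.1)⟩
  sup_parts := by
    have h := P.sup_parts
    rw [← insert_erase hB, sup_insert] at h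
    rw [id_eq] at h
    rw [sup_insert, id_eq, sup_eq_union, insert_union, ← sup_eq_union, h]
  bot_notMem := by
    simp only [bot_eq_empty, mem_insert, mem_erase, not_or]
    exact ⟨fun h => (insert_ne_empty a B) h.symm, fun h => P.bot_notMem h.2⟩

lemma addToPart_parts (ha : a ∉ s) (P : Finpartition s) {B : Finset A} (hB : B ∈ P.parts) :
    (addToPart ha P hB).parts = insert (insert a B) (P.parts.erase B) := rfl

/-- The gluing map. -/
def F (ha : a ∉ s) : (Σ P : Finpartition s, Option {B // B ∈ P.parts}) →
    Finpartition (insert a s)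
  | ⟨P, none⟩ => insertPart ha P
  | ⟨P, some ⟨_, hB⟩⟩ => addToPart ha P hB

lemma insertA_not_mem_erase (ha : a ∉ s) (P : Finpartition s) (B C : Finset A) :
    insert a B ∉ P.parts.erase C := fun h =>
  not_mem_of_mem_parts ha P (mem_of_mem_erase h) (mem_insert_self a B)

lemma F_injective (ha : a ∉ s) : Function.Injective (F ha) := by
  rintro ⟨P, o⟩ ⟨P', o'⟩ h
  match o, o' with
  | none, none =>
      have hp : insert {a} P.parts = insert {a} P'.parts := congrArg Finpartition.parts h
      have : P.parts = P'.parts := by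
        rw [← erase_insert (singleton_not_mem ha P), hp,
          erase_insert (singleton_not_mem ha P')]
      obtain rfl : P = P' := Finpartition.ext this
      rfl
  | none, some ⟨B', hB'⟩ =>
      exfalso
      have hp : insert {a} P.parts = insert (insert a B') (P'.parts.erase B') :=
        congrArg Finpartition.parts h
      have h1 : ({a} : Finset A) ∈ insert (insert a B') (P'.parts.erase B') := by
        rw [← hp]; exact mem_insert_self _ _
      rcases mem_insert.mp h1 with h2 | h2
      · obtain ⟨x, hx⟩ := P'.nonempty_of_mem_parts hB'
        have : x ∈ ({a} : Finset A) := h2 ▸ (mem_insert_of_mem hx)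
        rw [mem_singleton] at this
        exact not_mem_of_mem_parts ha P' hB' (this ▸ hx)
      · exact singleton_not_mem ha P' (mem_of_mem_erase h2)
  | some ⟨B, hB⟩, none =>
      exfalso
      have hp : insert (insert a B) (P.parts.erase B) = insert {a} P'.parts :=
        congrArg Finpartition.parts h
      have h1 : ({a} : Finset A) ∈ insert (insert a B) (P.parts.erase B) := by
        rw [hp]; exact mem_insert_self _ _
      rcases mem_insert.mp h1 with h2 | h2
      · obtain ⟨x, hx⟩ := P.nonempty_of_mem_parts hB
        have : x ∈ ({a} : Finset A) := h2 ▸ (mem_insert_of_mem hx)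
        rw [mem_singleton] at this
        exact not_mem_of_mem_parts ha P hB (this ▸ hx)
      · exact singleton_not_mem ha P (mem_of_mem_erase h2)
  | some ⟨B, hB⟩, some ⟨B', hB'⟩ =>
      have hp : insert (insert a B) (P.parts.erase B)
          = insert (insert a B') (P'.parts.erase B') := congrArg Finpartition.parts h
      have h1 : insert a B ∈ insert (insert a B') (P'.parts.erase B') := by
        rw [← hp]; exact mem_insert_self _ _
      have hBB' : B = B' := by
        rcases mem_insert.mp h1 with h2 | h2
        · have := congrArg (fun t => Finset.erase t a) h2
          simpa [erase_insert (not_mem_of_mem_parts ha P hB),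
            erase_insert (not_mem_of_mem_parts ha P' hB')] using this
        · exact absurd h2 (insertA_not_mem_erase ha P' B B')
      subst hBB'
      have hparts : P.parts = P'.parts := by
        have := congrArg (fun t => Finset.erase t (insert a B)) hp
        simp only [erase_insert (insertA_not_mem_erase ha P B B),
          erase_insert (insertA_not_mem_erase ha P' B B)] at this
        rw [← insert_erase hB, this, insert_erase hB']
      obtain rfl : P = P' := Finpartition.ext hparts
      rfl

lemma F_surjective (ha : a ∉ s) : Function.Surjective (F ha) := by
  intro Q
  have haM : a ∈ insert a s := mem_insert_self a s
  set B0 := Q.part a with hB0def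
  have hB0 : B0 ∈ Q.parts := Q.part_mem.mpr haM
  have haB0 : a ∈ B0 := Q.mem_part haM
  have hnot : ∀ C ∈ Q.parts.erase B0, a ∉ C := by
    intro C hC hac
    exact (mem_erase.mp hC).1 (Q.eq_of_mem_parts (mem_of_mem_erase hC) hB0 hac haB0)
  obtain ⟨T, hTeq⟩ : ∃ T, (Q.parts.erase B0).sup id = T := ⟨_, rfl⟩
  have haT : a ∉ T := by
    rw [← hTeq, Finset.mem_sup]
    rintro ⟨C, hC, hxC⟩
    exact hnot C hC hxC
  have hsupQ : B0 ∪ T = insert a s := by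
    have h := Q.sup_parts
    rw [← insert_erase hB0, sup_insert, id_eq, hTeq, sup_eq_union] at h
    exact h
  by_cases hsing : B0 = {a}
  · have hsup : (Q.parts.erase B0).sup id = s := by
      rw [hTeq]
      have h1 : insert a T = insert a s := by
        rw [← hsupQ, hsing, ← insert_eq]
      have := congrArg (fun t => Finset.erase t a) h1
      simpa [erase_insert haT, erase_insert ha] using this
    refine ⟨⟨Q.ofSubset (erase_subset _ _) hsup, none⟩, ?_⟩
    apply Finpartition.ext
    show insert {a} (Q.parts.erase B0) = Q.parts
    rw [← hsing, insert_erase hB0]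
  · set B := B0.erase a with hBdef
    have hBne : B.Nonempty := by
      rcases B.eq_empty_or_nonempty with h | h
      · exfalso
        apply hsing
        apply Finset.Subset.antisymm
        · intro x hx
          rcases eq_or_ne x a with rfl | hxa
          · exact mem_singleton_self x
          · have hxB : x ∈ B := mem_erase.mpr ⟨hxa, hx⟩
            rw [h] at hxB
            exact absurd hxB (notMem_empty x)
        · exact singleton_subset_iff.mpr haB0
      · exact h
    have hBnotin : B ∉ Q.parts.erase B0 := by
      intro h
      obtain ⟨x, hx⟩ := hBne
      have hd := Q.disjoint (mem_of_mem_erase h) hB0 (mem_erase.mp h).1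
      have hmem : x ∈ B ⊓ B0 := mem_inter.mpr ⟨hx, (mem_erase.mp hx).2⟩
      have := hd.le_bot hmem
      simp at this
    refine ⟨⟨⟨insert B (Q.parts.erase B0), ?_, ?_, ?_⟩, some ⟨B, mem_insert_self _ _⟩⟩, ?_⟩
    · rw [supIndep_iff_pairwiseDisjoint, coe_insert]
      refine (Q.disjoint.subset (coe_subset.mpr (fun x hx => mem_of_mem_erase hx))).insert ?_
      intro C hC _
      exact Finset.disjoint_of_subset_left (erase_subset a B0)
        (Q.disjoint hB0 (mem_of_mem_erase (mem_coe.mp hC))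
          (Ne.symm (mem_erase.mp (mem_coe.mp hC)).1))
    · rw [sup_insert, id_eq, hTeq, sup_eq_union]
      have h1 : B ∪ T = (B0 ∪ T).erase a := by
        rw [erase_union_distrib, erase_eq_of_notMem haT, hBdef]
      rw [h1, hsupQ, erase_insert ha]
    · simp only [bot_eq_empty, mem_insert, not_or]
      exact ⟨fun h => (Finset.nonempty_iff_ne_empty.mp hBne) h.symm,
        fun h => Q.bot_notMem (mem_of_mem_erase h)⟩
    · apply Finpartition.ext
      show insert (insert a B) ((insert B (Q.parts.erase B0)).erase B) = Q.parts
      rw [erase_insert hBnotin, hBdef, insert_erase haB0, insert_erase hB0]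

open Polynomial

lemma term_none (α c : ℝ) (ha : a ∉ s) (P : Finpartition s) :
    (∏ B ∈ (insertPart ha P).parts, (descPochhammer ℝ B.card).eval α) *
      (descPochhammer ℝ (insertPart ha P).parts.card).eval (-c)
    = α * (((∏ B ∈ P.parts, (descPochhammer ℝ B.card).eval α) *
        (descPochhammer ℝ P.parts.card).eval (-c)) * (-c - P.parts.card)) := by
  rw [insertPart_parts, prod_insert (singleton_not_mem ha P),
    card_insert_of_notMem (singleton_not_mem ha P), descPochhammer_succ_right,
    eval_mul, eval_sub, eval_X, eval_natCast, card_singleton, descPochhammer_one, eval_X]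
  ring

lemma term_some (α c : ℝ) (ha : a ∉ s) (P : Finpartition s) {B : Finset A}
    (hB : B ∈ P.parts) :
    (∏ C ∈ (addToPart ha P hB).parts, (descPochhammer ℝ C.card).eval α) *
      (descPochhammer ℝ (addToPart ha P hB).parts.card).eval (-c)
    = (α - B.card) * ((∏ C ∈ P.parts, (descPochhammer ℝ C.card).eval α) *
        (descPochhammer ℝ P.parts.card).eval (-c)) := by
  rw [addToPart_parts, prod_insert (insertA_not_mem_erase ha P B B),
    card_insert_of_notMem (insertA_not_mem_erase ha P B B),
    card_erase_add_one hB,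
    card_insert_of_notMem (not_mem_of_mem_parts ha P hB),
    descPochhammer_succ_right, eval_mul, eval_sub, eval_X, eval_natCast,
    ← Finset.mul_prod_erase P.parts _ hB]
  ring

lemma key (α c : ℝ) (s : Finset A) :
    ∑ P : Finpartition s,
        (∏ B ∈ P.parts, (descPochhammer ℝ B.card).eval α) *
          (descPochhammer ℝ P.parts.card).eval (-c) =
      (descPochhammer ℝ s.card).eval (-(α * c)) := by
  induction s using Finset.induction_on with
  | empty =>
      haveI : Unique (Finpartition (∅ : Finset A)) := by
        rw [← bot_eq_empty]; infer_instance
      rw [Fintype.sum_unique]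
      have hp : (default : Finpartition (∅ : Finset A)).parts = ∅ :=
        Finpartition.parts_eq_empty_iff.mpr bot_eq_empty.symm
      simp [hp, descPochhammer_zero]
  | @insert a s ha IH =>
      have hbij : Function.Bijective (F ha) := ⟨F_injective ha, F_surjective ha⟩
      have hbsum := Fintype.sum_bijective (F ha) hbij
        (fun x => (∏ B ∈ (F ha x).parts, (descPochhammer ℝ B.card).eval α) *
          (descPochhammer ℝ (F ha x).parts.card).eval (-c))
        (fun Q => (∏ B ∈ Q.parts, (descPochhammer ℝ B.card).eval α) *
          (descPochhammer ℝ Q.parts.card).eval (-c))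
        (fun x => rfl)
      rw [← hbsum, ← Finset.univ_sigma_univ, Finset.sum_sigma]
      have hper : ∀ P : Finpartition s,
          (∑ o : Option {B // B ∈ P.parts},
            (∏ B ∈ (F ha ⟨P, o⟩).parts, (descPochhammer ℝ B.card).eval α) *
              (descPochhammer ℝ (F ha ⟨P, o⟩).parts.card).eval (-c))
          = (-(α*c) - s.card) *
              ((∏ B ∈ P.parts, (descPochhammer ℝ B.card).eval α) *
                (descPochhammer ℝ P.parts.card).eval (-c)) := by
        intro P
        rw [Fintype.sum_option]
        have h1 : F ha (⟨P, none⟩ : Σ P : Finpartition s, Option {B // B ∈ P.parts})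
            = insertPart ha P := rfl
        have h2 : ∀ b : {B // B ∈ P.parts},
            (∏ B ∈ (F ha ⟨P, some b⟩).parts, (descPochhammer ℝ B.card).eval α) *
              (descPochhammer ℝ (F ha ⟨P, some b⟩).parts.card).eval (-c)
            = (α - (b : Finset A).card) *
                ((∏ C ∈ P.parts, (descPochhammer ℝ C.card).eval α) *
                  (descPochhammer ℝ P.parts.card).eval (-c)) := by
          intro b
          exact term_some α c ha P b.2
        rw [h1, term_none α c ha P]
        simp only [h2]
        rw [Finset.sum_coe_sort P.parts
          (fun B => (α - (B.card : ℝ)) * ((∏ C ∈ P.parts, (descPochhammer ℝ C.card).eval α) *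
            (descPochhammer ℝ P.parts.card).eval (-c))), ← Finset.sum_mul]
        have hsum : ∑ B ∈ P.parts, ((α : ℝ) - B.card) = P.parts.card * α - s.card := by
          rw [Finset.sum_sub_distrib, Finset.sum_const, nsmul_eq_mul]
          congr 1
          rw [← Nat.cast_sum]
          exact congrArg _ P.sum_card_parts
        rw [hsum]
        ring
      simp only [hper]
      rw [← Finset.mul_sum, IH, card_insert_of_notMem ha, descPochhammer_succ_right,
        eval_mul, eval_sub, eval_X, eval_natCast]
      ring

end Chara

open Finset

/-- Charalambides' identity: summing over all set partitions `π` of `{1,…,n}`,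
`∑_π (∏_{B ∈ π} α^{(|B|)}) (-c)^{(|π|)} = (-αc)^{(n)}`, where `x^{(m)}` denotes the
falling factorial; equivalently `∑ₖ C(n,k,α)(-c)^{(k)} = (-αc)^{(n)}` with the
C-numbers `C(n,k,α) = ∑_{|π|=k} ∏_{B∈π} α^{(|B|)}`. -/
theorem stmt_18 (α c : ℝ) (n : ℕ) (hn : 1 ≤ n) :
    ∑ P : Finpartition (Finset.univ : Finset (Fin n)),
        (∏ B ∈ P.parts, (descPochhammer ℝ B.card).eval α) *
          (descPochhammer ℝ P.parts.card).eval (-c) =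
      (descPochhammer ℝ n).eval (-(α * c)) := by
  have := Chara.key (A := Fin n) α c Finset.univ
  simpa using this
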